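/- In the free associative algebra k⟨X⟩ over a field k with X linearly ordered and X* ordered by the degree-lexicographic order, for every non-associative Lyndon-Shirshov word [u], the leading monomial of [u] (viewed as a noncommutative polynomial via the commutator bracket [a,b] = ab − ba) equals the underlying associative word u, with leading coefficient 1. -/

import Mathlib

open List

/-- The lexicographic order used by Shirshov: a word is *greater* than any of its
proper extensions (`w > w ++ t` for `t ≠ []`), and otherwise words are compared
letterwise by the order on the alphabet.  `LSLt u v` means `u < v`. -/
def LSLt {X : Type*} [LinearOrder X] : List X → List X → Prop
  | _ :: _, [] => True
  | [], _ => False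
  | a :: u, b :: v => a < b ∨ (a = b ∧ LSLt u v)

/-- `u ≤ v` in the Shirshov lexicographic order. -/
def LSLe {X : Type*} [LinearOrder X] (u v : List X) : Prop := u = v ∨ LSLt u v

/-- The degree-lexicographic order: compare first by length, then lexicographically. -/
def DegLt {X : Type*} [LinearOrder X] (u v : List X) : Prop :=
  u.length < v.length ∨ (u.length = v.length ∧ LSLt u v)

/-- `≤` in the degree-lexicographic order. -/
def DegLe {X : Type*} [LinearOrder X] (u v : List X) : Prop := u = v ∨ DegLt u v

/-- An associative Lyndon–Shirshov word: a nonempty word `u` such that `vw > wv`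
(lexicographically) for every factorization `u = vw` into nonempty parts. -/
def IsALSW {X : Type*} [LinearOrder X] (u : List X) : Prop :=
  u ≠ [] ∧ ∀ v w : List X, v ≠ [] → w ≠ [] → u = v ++ w → LSLt (w ++ v) (v ++ w)

/-- The underlying associative word of a non-associative word (binary bracketing). -/
def wordOf {X : Type*} : FreeMagma X → List X
  | .of x => [x]
  | .mul a b => wordOf a ++ wordOf b

/-- `w` is the longest proper suffix of `u` which is an ALSW. -/
def LongestALSWProperSuffix {X : Type*} [LinearOrder X] (u w : List X) : Prop :=
  IsALSW w ∧ (∃ v : List X, v ≠ [] ∧ u = v ++ w) ∧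
    ∀ w' : List X, IsALSW w' → (∃ v' : List X, v' ≠ [] ∧ u = v' ++ w') →
      w'.length ≤ w.length

/-- The standard (up-to-down) bracketing of an ALSW: `[x] = x` and
`[u] = [[v][w]]` where `w` is the longest proper ALSW suffix of `u`. -/
inductive IsStdBracketing {X : Type*} [LinearOrder X] : List X → FreeMagma X → Prop
  | of (x : X) : IsStdBracketing [x] (.of x)
  | mul {v w : List X} {tv tw : FreeMagma X} :
      IsALSW (v ++ w) → LongestALSWProperSuffix (v ++ w) w →
      IsStdBracketing v tv → IsStdBracketing w tw →
      IsStdBracketing (v ++ w) (tv * tw)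

/-- A non-associative Lyndon–Shirshov word, via Shirshov's conditions:
the underlying word is an ALSW, both halves are NLSWs, and the right factor of
the left half is `≤` the right half. -/
inductive IsNLSW {X : Type*} [LinearOrder X] : FreeMagma X → Prop
  | of (x : X) : IsNLSW (.of x)
  | mul {tv tw : FreeMagma X} :
      IsNLSW tv → IsNLSW tw → IsALSW (wordOf (tv * tw)) →
      (∀ t₁ t₂ : FreeMagma X, tv = t₁ * t₂ → LSLe (wordOf t₂) (wordOf tw)) →
      IsNLSW (tv * tw)

/-- The free associative algebra `k⟨X⟩`, realized as the monoid algebra of the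
free monoid on `X`. -/
abbrev FreeAssocAlg (k X : Type*) [Field k] := MonoidAlgebra k (FreeMonoid X)

/-- The monomial of `k⟨X⟩` corresponding to a word `u ∈ X*`. -/
noncomputable def monom (k : Type*) [Field k] {X : Type*} (u : List X) : FreeAssocAlg k X :=
  MonoidAlgebra.single (FreeMonoid.ofList u) 1

/-- The coefficient of the word `u` in `f ∈ k⟨X⟩`. -/
def coeffW {k X : Type*} [Field k] (f : FreeAssocAlg k X) (u : List X) : k :=
  f.coeff (FreeMonoid.ofList u)

/-- `u` is the leading word of `f` with respect to the deg-lex order. -/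
def IsLeadingWord {k X : Type*} [Field k] [LinearOrder X]
    (f : FreeAssocAlg k X) (u : List X) : Prop :=
  coeffW f u ≠ 0 ∧ ∀ w : List X, coeffW f w ≠ 0 → w = u ∨ DegLt w u

/-- `f` is monic: its leading coefficient is `1`. -/
def IsMonic {k X : Type*} [Field k] [LinearOrder X] (f : FreeAssocAlg k X) : Prop :=
  ∃ u : List X, IsLeadingWord f u ∧ coeffW f u = 1

/-- The generator `x ∈ X` inside `k⟨X⟩`. -/
noncomputable def gen (k : Type*) [Field k] {X : Type*} (x : X) : FreeAssocAlg k X :=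
  monom k [x]

attribute [local instance] LieRing.ofAssociativeRing

/-- The free Lie algebra `Lie(X)`: the Lie subalgebra of `k⟨X⟩` generated by `X`
under the commutator bracket. -/
noncomputable def LieX (k X : Type*) [Field k] : LieSubalgebra k (FreeAssocAlg k X) :=
  LieSubalgebra.lieSpan k _ (Set.range (gen k (X := X)))

/-- Evaluation of a non-associative word in `k⟨X⟩`, interpreting the binary
operation as the commutator `(ab) = ab - ba`. -/
noncomputable def evalC {k X : Type*} [Field k] : FreeMagma X → FreeAssocAlg k X
  | .of x => gen k x
  | .mul a b => evalC a * evalC b - evalC b * evalC a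

section OrderLemmas

variable {X : Type*} [LinearOrder X]

lemma not_lslt_nil : ∀ v : List X, ¬ LSLt [] v
  | [], h => h
  | _ :: _, h => h

lemma lslt_irrefl : ∀ u : List X, ¬ LSLt u u
  | [] => not_lslt_nil _
  | a :: u => fun h => by
      simp only [LSLt] at h
      rcases h with h | ⟨-, h⟩
      · exact lt_irrefl a h
      · exact lslt_irrefl u h

lemma lslt_trans : ∀ {u v w : List X}, LSLt u v → LSLt v w → LSLt u w
  | [], _, _, h1, _ => absurd h1 (not_lslt_nil _)
  | _ :: _, [], _, _, h2 => absurd h2 (not_lslt_nil _)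
  | _ :: _, _ :: _, [], _, _ => trivial
  | a :: u, b :: v, c :: w, h1, h2 => by
      simp only [LSLt] at h1 h2 ⊢
      rcases h1 with h1 | ⟨rfl, h1⟩
      · rcases h2 with h2 | ⟨rfl, h2⟩
        · exact Or.inl (h1.trans h2)
        · exact Or.inl h1
      · rcases h2 with h2 | ⟨rfl, h2⟩
        · exact Or.inl h2
        · exact Or.inr ⟨rfl, lslt_trans h1 h2⟩

lemma lslt_append_left : ∀ {a v : List X}, a.length = v.length → LSLt a v →
    ∀ (b w : List X), LSLt (a ++ b) (v ++ w)
  | [], _, _, h, _, _ => absurd h (not_lslt_nil _)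
  | _ :: _, [], hl, _, _, _ => by simp at hl
  | x :: a, y :: v, hl, h, b, w => by
      simp only [LSLt] at h
      simp only [List.cons_append, LSLt]
      rcases h with h | ⟨rfl, h⟩
      · exact Or.inl h
      · exact Or.inr ⟨rfl, lslt_append_left (by simpa using hl) h b w⟩

lemma lslt_append_right : ∀ (v : List X) {b w : List X}, LSLt b w → LSLt (v ++ b) (v ++ w)
  | [], _, _, h => h
  | x :: v, b, w, h => by
      show LSLt (x :: (v ++ b)) (x :: (v ++ w))
      exact Or.inr ⟨rfl, lslt_append_right v h⟩

lemma deglt_trans {u v w : List X} (h1 : DegLt u v) (h2 : DegLt v w) : DegLt u w := by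
  rcases h1 with h1 | ⟨e1, h1⟩ <;> rcases h2 with h2 | ⟨e2, h2⟩
  · exact Or.inl (h1.trans h2)
  · exact Or.inl (e2 ▸ h1)
  · exact Or.inl (e1 ▸ h2)
  · exact Or.inr ⟨e1.trans e2, lslt_trans h1 h2⟩

lemma deglt_irrefl (u : List X) : ¬ DegLt u u := fun h => by
  rcases h with h | ⟨-, h⟩
  · exact lt_irrefl _ h
  · exact lslt_irrefl u h

lemma degle_length {a v : List X} (h : DegLe a v) : a.length ≤ v.length := by
  rcases h with rfl | h | ⟨e, -⟩
  · exact le_rfl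
  · exact h.le
  · exact e.le

lemma degle_append {a v b w : List X} (h1 : DegLe a v) (h2 : DegLe b w) :
    DegLe (a ++ b) (v ++ w) := by
  have hbl : b.length ≤ w.length := degle_length h2
  rcases h1 with rfl | h1
  · rcases h2 with rfl | h2
    · exact Or.inl rfl
    · right
      rcases h2 with h2 | ⟨e2, h2⟩
      · exact Or.inl (by simp only [List.length_append]; omega)
      · exact Or.inr ⟨by simp [e2], lslt_append_right a h2⟩
  · right
    rcases h1 with h1 | ⟨e1, h1⟩
    · exact Or.inl (by simp only [List.length_append]; omega)
    · rcases lt_or_eq_of_le hbl with hb | hb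
      · exact Or.inl (by simp only [List.length_append]; omega)
      · exact Or.inr ⟨by simp only [List.length_append]; omega,
          lslt_append_left e1 h1 b w⟩

end OrderLemmas

section CoeffLemmas

variable {k X : Type*} [Field k] [LinearOrder X]

/-- `f` has coefficient `1` at `u` and all words in its support are `≤ u` (deg-lex). -/
def GoodAt (f : FreeAssocAlg k X) (u : List X) : Prop :=
  coeffW f u = 1 ∧ ∀ z : List X, coeffW f z ≠ 0 → DegLe z u

lemma coeffW_toList (f : FreeAssocAlg k X) (a : FreeMonoid X) :
    coeffW f (FreeMonoid.toList a) = f.coeff a := rfl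

lemma exists_of_coeff_mul_ne_zero {f g : FreeAssocAlg k X} {z : List X}
    (h : coeffW (f * g) z ≠ 0) :
    ∃ a b : List X, z = a ++ b ∧ coeffW f a ≠ 0 ∧ coeffW g b ≠ 0 := by
  classical
  rw [coeffW, MonoidAlgebra.mul_apply, Finsupp.sum] at h
  obtain ⟨a, ha, h⟩ := Finset.exists_ne_zero_of_sum_ne_zero h
  rw [Finsupp.sum] at h
  obtain ⟨b, hb, h⟩ := Finset.exists_ne_zero_of_sum_ne_zero h
  split_ifs at h with hab
  · refine ⟨FreeMonoid.toList a, FreeMonoid.toList b, ?_, ?_, ?_⟩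
    · have := congrArg FreeMonoid.toList hab
      simpa [FreeMonoid.toList_mul] using this.symm
    · rw [coeffW_toList]; exact Finsupp.mem_support_iff.1 ha
    · rw [coeffW_toList]; exact Finsupp.mem_support_iff.1 hb
  · exact absurd rfl h

lemma parts_eq {a b v w : List X} (h : a ++ b = v ++ w)
    (h1 : a.length ≤ v.length) (h2 : b.length ≤ w.length) : a = v ∧ b = w := by
  have hl := congrArg List.length h
  simp only [List.length_append] at hl
  exact List.append_inj h (by omega)

lemma goodAt_mul {f g : FreeAssocAlg k X} {v w : List X}
    (hf : GoodAt f v) (hg : GoodAt g w) : GoodAt (f * g) (v ++ w) := by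
  classical
  have hvmem : FreeMonoid.ofList v ∈ f.coeff.support := by
    rw [Finsupp.mem_support_iff]
    have := hf.1; rw [coeffW] at this; rw [this]; exact one_ne_zero
  have hwmem : FreeMonoid.ofList w ∈ g.coeff.support := by
    rw [Finsupp.mem_support_iff]
    have := hg.1; rw [coeffW] at this; rw [this]; exact one_ne_zero
  constructor
  · rw [coeffW, MonoidAlgebra.mul_apply, Finsupp.sum,
      Finset.sum_eq_single_of_mem (FreeMonoid.ofList v) hvmem]
    · rw [Finsupp.sum, Finset.sum_eq_single_of_mem (FreeMonoid.ofList w) hwmem]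
      · rw [if_pos (show FreeMonoid.ofList v * FreeMonoid.ofList w
            = FreeMonoid.ofList (v ++ w) from rfl)]
        have h1 := hf.1; have h2 := hg.1
        rw [coeffW] at h1 h2
        rw [h1, h2, one_mul]
      · intro b hb hne
        have hab : FreeMonoid.ofList v * b ≠ FreeMonoid.ofList (v ++ w) := by
          intro hab
          apply hne
          have := congrArg FreeMonoid.toList hab
          simp only [FreeMonoid.toList_mul, FreeMonoid.toList_ofList] at this
          exact FreeMonoid.toList.injective (List.append_cancel_left this)
        simp only [if_neg hab]
    · intro a ha hne
      apply Finset.sum_eq_zero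
      intro b hb
      have hab : a * b ≠ FreeMonoid.ofList (v ++ w) := by
        intro hab
        apply hne
        have heq : FreeMonoid.toList a ++ FreeMonoid.toList b = v ++ w := by
          have := congrArg FreeMonoid.toList hab
          simpa [FreeMonoid.toList_mul] using this
        have hfa : coeffW f (FreeMonoid.toList a) ≠ 0 := by
          rw [coeffW_toList]; exact Finsupp.mem_support_iff.1 ha
        have hgb : coeffW g (FreeMonoid.toList b) ≠ 0 := by
          rw [coeffW_toList]; exact Finsupp.mem_support_iff.1 hb
        have h1 := degle_length (hf.2 _ hfa)
        have h2 := degle_length (hg.2 _ hgb)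
        have := (parts_eq heq h1 h2).1
        exact FreeMonoid.toList.injective this
      simp only [if_neg hab]
  · intro z hz
    obtain ⟨a, b, rfl, ha, hb⟩ := exists_of_coeff_mul_ne_zero hz
    exact degle_append (hf.2 a ha) (hg.2 b hb)

end CoeffLemmas

/-- For every non-associative Lyndon–Shirshov word `[u]`
(the standard bracketing of an ALSW `u`), its interpretation in `k⟨X⟩` via the
commutator bracket has leading word `u` (deg-lex order) with leading
coefficient `1`. -/
theorem nlsw_leading_word {k X : Type*} [Field k] [LinearOrder X]
    (u : List X) (t : FreeMagma X) (ht : IsStdBracketing u t) :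
    IsLeadingWord (evalC (k := k) t) u ∧ coeffW (evalC (k := k) t) u = 1 := by
  suffices h : GoodAt (evalC (k := k) t) u by
    exact ⟨⟨by rw [h.1]; exact one_ne_zero, fun z hz => h.2 z hz⟩, h.1⟩
  induction ht with
  | of x =>
      constructor
      · classical
        show coeffW (MonoidAlgebra.single (FreeMonoid.ofList [x]) (1 : k)) [x] = 1
        rw [coeffW, MonoidAlgebra.coeff_single, Finsupp.single_apply, if_pos rfl]
      · classical
        intro z hz
        left
        rw [show evalC (k := k) (FreeMagma.of x) = monom k [x] from rfl, monom, coeffW,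
          MonoidAlgebra.coeff_single, Finsupp.single_apply] at hz
        split_ifs at hz with h
        · exact (FreeMonoid.ofList.injective h).symm
        · exact absurd rfl hz
  | @mul v w tv tw halsw hsuf hbv hbw ihv ihw =>
      have hvne : v ≠ [] := by
        obtain ⟨v', hv', heq⟩ := hsuf.2.1
        have : v = v' := List.append_cancel_right heq
        rw [this]; exact hv'
      have hwne : w ≠ [] := hsuf.1.1
      have hlt : LSLt (w ++ v) (v ++ w) := halsw.2 v w hvne hwne rfl
      have hdlt : DegLt (w ++ v) (v ++ w) :=
        Or.inr ⟨by simp only [List.length_append]; omega, hlt⟩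
      have hfg := goodAt_mul ihv ihw
      have hgf := goodAt_mul ihw ihv
      have hsub : evalC (k := k) (tv * tw)
          = evalC tv * evalC tw - evalC tw * evalC tv := rfl
      have h0 : coeffW (evalC (k := k) tw * evalC tv) (v ++ w) = 0 := by
        by_contra h
        rcases hgf.2 _ h with e | hlt2
        · rw [e] at hdlt
          exact deglt_irrefl _ hdlt
        · exact deglt_irrefl _ (deglt_trans hlt2 hdlt)
      constructor
      · rw [hsub]
        have : coeffW (evalC (k := k) tv * evalC tw - evalC tw * evalC tv) (v ++ w)
            = coeffW (evalC (k := k) tv * evalC tw) (v ++ w)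
              - coeffW (evalC (k := k) tw * evalC tv) (v ++ w) := by
          rw [coeffW, coeffW, coeffW, MonoidAlgebra.coeff_sub, Finsupp.sub_apply]
        rw [this, hfg.1, h0, sub_zero]
      · intro z hz
        rw [hsub] at hz
        have hz' : coeffW (evalC (k := k) tv * evalC tw) z ≠ 0 ∨
            coeffW (evalC (k := k) tw * evalC tv) z ≠ 0 := by
          by_contra h
          push_neg at h
          apply hz
          rw [coeffW, MonoidAlgebra.coeff_sub, Finsupp.sub_apply]
          simp only [coeffW] at h
          rw [h.1, h.2, sub_zero]
        rcases hz' with h | h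
        · exact hfg.2 z h
        · right
          rcases hgf.2 z h with rfl | h2
          · exact hdlt
          · exact deglt_trans h2 hdlt
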